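/- Let Q be a probability measure on (Ω, 𝓑), where 𝓑 = σ(X_n : n ≥ 1) for real random variables X_n, and let 𝓐 = ⋂_n σ(X_n, X_{n+1}, …) be the tail σ-field. If Q(A) ∈ {0,1} for every A ∈ 𝓐, then for every B ∈ 𝓑, sup_{H ∈ σ(X_n, X_{n+1},…)} |Q(B ∩ H) − Q(B)Q(H)| → 0 as n → ∞. -/

import Mathlib

open MeasureTheory MeasurableSpace Set Filter
open scoped ENNReal

lemma aux_meas_limsup {Ω : Type*} {m : MeasurableSpace Ω} (v : ℕ → Ω → ℝ≥0∞)
    (hv : ∀ k, Measurable[m] (v k)) :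
    Measurable[m] fun ω => Filter.limsup (fun k => v k ω) atTop :=
  Measurable.limsup hv

lemma ae_const_of_zero_one {Ω : Type*} {m0 : MeasurableSpace Ω} (Q : Measure Ω)
    [IsProbabilityMeasure Q] (𝓐 : MeasurableSpace Ω) (hle : 𝓐 ≤ m0)
    (h01 : ∀ A : Set Ω, MeasurableSet[𝓐] A → Q A = 0 ∨ Q A = 1)
    (g : Ω → ℝ) (hg : Measurable[𝓐] g)
    (hbdd : ∀ᵐ ω ∂Q, |g ω| ≤ 1) :
    ∃ c : ℝ, g =ᵐ[Q] fun _ => c := by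
  have hms : ∀ t : ℝ, MeasurableSet[𝓐] {ω | g ω ≤ t} := fun t => hg measurableSet_Iic
  have hms0 : ∀ t : ℝ, MeasurableSet[m0] {ω | g ω ≤ t} := fun t => hle _ (hms t)
  have key : ∀ t : ℝ, Q {ω | g ω ≤ t}ᶜ = 0 ↔ Q {ω | g ω ≤ t} = 1 := fun t =>
    prob_compl_eq_zero_iff (hms0 t)
  set S : Set ℝ := {t : ℝ | Q {ω | g ω ≤ t} = 1} with hS
  have h2S : (2 : ℝ) ∈ S := by
    rw [hS, Set.mem_setOf_eq, ← key]
    refine measure_mono_null (fun ω hω => ?_) (ae_iff.mp hbdd)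
    simp only [Set.mem_compl_iff, Set.mem_setOf_eq, not_le] at hω ⊢
    linarith [le_abs_self (g ω)]
  have hSbdd : ∀ t ∈ S, (-2 : ℝ) ≤ t := by
    intro t ht
    by_contra hlt
    push_neg at hlt
    have hnull : Q {ω | g ω ≤ t} = 0 := by
      refine measure_mono_null (fun ω hω => ?_) (ae_iff.mp hbdd)
      simp only [Set.mem_setOf_eq, not_le] at hω ⊢
      linarith [neg_abs_le (g ω)]
    rw [hS] at ht
    simp only [Set.mem_setOf_eq, hnull] at ht
    exact one_ne_zero ht.symm
  have hSne : S.Nonempty := ⟨2, h2S⟩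
  have hSbb : BddBelow S := ⟨-2, fun t ht => hSbdd t ht⟩
  set c : ℝ := sInf S with hc
  have hQmem : ∀ t ∈ S, Q {ω | g ω ≤ t} = 1 := fun t ht => ht
  have hle1 : Q {ω | g ω ≤ c} = 1 := by
    rw [← key]
    have hunion : {ω | g ω ≤ c}ᶜ = ⋃ n : ℕ, {ω | g ω ≤ c + 1/(n+1)}ᶜ := by
      ext ω
      simp only [Set.mem_compl_iff, Set.mem_setOf_eq, not_le, Set.mem_iUnion]
      constructor
      · intro h
        obtain ⟨n, hn⟩ := exists_nat_one_div_lt (sub_pos.mpr h)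
        exact ⟨n, by push_cast at hn ⊢; linarith⟩
      · rintro ⟨n, hn⟩
        have : (0:ℝ) < 1/(n+1) := by positivity
        linarith
    rw [hunion]
    refine measure_iUnion_null fun n => ?_
    rw [key]
    obtain ⟨t, htS, htlt⟩ : ∃ t ∈ S, t < c + 1/(n+1) := by
      refine exists_lt_of_csInf_lt hSne ?_
      have hpos : (0:ℝ) < 1/(n+1) := by positivity
      linarith
    have h1 : (1:ℝ≥0∞) ≤ Q {ω | g ω ≤ c + 1/(n+1)} :=
      (hQmem t htS) ▸ measure_mono (fun ω hω => le_trans hω htlt.le)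
    exact le_antisymm prob_le_one h1
  have hlt0 : Q {ω | g ω < c} = 0 := by
    have hunion : {ω | g ω < c} = ⋃ n : ℕ, {ω | g ω ≤ c - 1/(n+1)} := by
      ext ω
      simp only [Set.mem_setOf_eq, Set.mem_iUnion]
      constructor
      · intro h
        obtain ⟨n, hn⟩ := exists_nat_one_div_lt (sub_pos.mpr h)
        exact ⟨n, by push_cast at hn ⊢; linarith⟩
      · rintro ⟨n, hn⟩
        have : (0:ℝ) < 1/(n+1) := by positivity
        linarith
    rw [hunion]
    refine measure_iUnion_null fun n => ?_
    rcases h01 _ (hms (c - 1/(n+1))) with h | h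
    · exact h
    · exfalso
      have : c ≤ c - 1/(n+1) := csInf_le hSbb h
      have hpos : (0:ℝ) < 1/(n+1) := by positivity
      linarith
  refine ⟨c, ?_⟩
  have : {ω | ¬ g ω = c} ⊆ {ω | g ω < c} ∪ {ω | g ω ≤ c}ᶜ := by
    intro ω hω
    simp only [Set.mem_setOf_eq] at hω
    rcases lt_trichotomy (g ω) c with h | h | h
    · exact Or.inl h
    · exact absurd h hω
    · exact Or.inr (by simp only [Set.mem_compl_iff, Set.mem_setOf_eq, not_le]; exact h)
  refine measure_mono_null this (measure_union_null hlt0 ?_)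
  rwa [key]


theorem stmt_11 {Ω : Type*} [m𝓑 : MeasurableSpace Ω] (X : ℕ → Ω → ℝ)
    (hgen : m𝓑 = ⨆ n, MeasurableSpace.comap (X n) inferInstance)
    (𝓣 : ℕ → MeasurableSpace Ω)
    (h𝓣 : ∀ n, 𝓣 n = ⨆ k, ⨆ _ : n ≤ k, MeasurableSpace.comap (X k) inferInstance)
    (𝓐 : MeasurableSpace Ω) (h𝓐 : 𝓐 = ⨅ n, 𝓣 n)
    (Q : @Measure Ω m𝓑) (hQprob : IsProbabilityMeasure Q)
    (h01 : ∀ A : Set Ω, MeasurableSet[𝓐] A → Q A = 0 ∨ Q A = 1) :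
    ∀ B : Set Ω, MeasurableSet[m𝓑] B →
      Tendsto (fun n => ⨆ H : {H : Set Ω // MeasurableSet[𝓣 n] H},
          |(Q (B ∩ H.1)).toReal - (Q B).toReal * (Q H.1).toReal|)
        atTop (nhds 0) := by
  intro B hB
  letI : MeasurableSpace Ω := m𝓑
  -- basic σ-algebra facts
  have hle : ∀ n, 𝓣 n ≤ m𝓑 := by
    intro n
    rw [h𝓣 n]
    calc (⨆ k, ⨆ _ : n ≤ k, MeasurableSpace.comap (X k) inferInstance)
        ≤ ⨆ k, MeasurableSpace.comap (X k) inferInstance :=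
          iSup_le fun k => iSup_le fun _ => le_iSup (fun k => MeasurableSpace.comap (X k) inferInstance) k
      _ = m𝓑 := hgen.symm
  have hanti : Antitone 𝓣 := by
    intro n m hnm
    rw [h𝓣 n, h𝓣 m]
    refine iSup_le fun k => iSup_le fun hk => ?_
    exact le_iSup₂ (f := fun k (_ : n ≤ k) => MeasurableSpace.comap (X k) inferInstance) k
      (le_trans hnm hk)
  have h𝓐le : 𝓐 ≤ m𝓑 := h𝓐 ▸ (iInf_le 𝓣 0).trans (hle 0)
  haveI := hQprob
  haveI : ∀ n, SigmaFinite (Q.trim (hle n)) := fun n => by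
    haveI := isFiniteMeasure_trim (μ := Q) (hle n)
    infer_instance
  set ind : Ω → ℝ := B.indicator (fun _ => (1:ℝ)) with hind
  have hind_int : Integrable ind Q := (integrable_const (1:ℝ)).indicator hB
  have hind0 : ∀ x, 0 ≤ ind x := fun x => Set.indicator_nonneg (fun _ _ => zero_le_one) x
  have hind1 : ∀ x, ind x ≤ 1 := fun x => Set.indicator_le' (fun _ _ => le_refl _) (fun _ _ => zero_le_one) x
  set f : ℕ → Ω → ℝ := fun n => Q[ind | 𝓣 n] with hf
  have hfm : ∀ n, StronglyMeasurable[𝓣 n] (f n) := fun n => stronglyMeasurable_condExp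
  have hfint : ∀ n, Integrable (f n) Q := fun n => integrable_condExp
  have hfaesm : ∀ n, AEStronglyMeasurable (f n) Q := fun n =>
    ((hfm n).mono (hle n)).aestronglyMeasurable
  have hf0 : ∀ n, ∀ᵐ x ∂Q, 0 ≤ f n x := fun n => condExp_nonneg (Eventually.of_forall hind0)
  have hf1 : ∀ n, ∀ᵐ x ∂Q, f n x ≤ 1 := by
    intro n
    have h := condExp_mono (m := 𝓣 n) hind_int (integrable_const (1:ℝ))
      (Eventually.of_forall hind1)
    have hc : Q[(fun _ => (1:ℝ)) | 𝓣 n] = fun _ => (1:ℝ) := condExp_const (hle n) 1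
    rw [hc] at h
    exact h
  have hfb : ∀ n, ∀ᵐ x ∂Q, ‖f n x‖ ≤ 1 := by
    intro n
    filter_upwards [hf0 n, hf1 n] with x h0 h1
    rw [Real.norm_eq_abs, abs_le]
    exact ⟨by linarith, h1⟩
  have hprod : ∀ m n, Integrable (fun x => f m x * f n x) Q := fun m n =>
    (hfint n).bdd_mul (hfaesm m) (hfb m)
  set a : ℕ → ℝ := fun n => ∫ x, f n x * f n x ∂Q with ha
  -- ∫ f n * f m = a n for m ≤ n
  have hmul : ∀ m n, m ≤ n → ∫ x, f n x * f m x ∂Q = a n := by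
    intro m n hmn
    have htower : Q[f m | 𝓣 n] =ᵐ[Q] f n := condExp_condExp_of_le (hanti hmn) (hle m)
    have hpull : Q[(fun x => f n x * f m x) | 𝓣 n] =ᵐ[Q] fun x => f n x * (Q[f m | 𝓣 n]) x := by
      have := condExp_mul_of_stronglyMeasurable_left (μ := Q) (hfm n) (hprod n m) (hfint m)
      exact this
    calc ∫ x, f n x * f m x ∂Q = ∫ x, (Q[(fun x => f n x * f m x) | 𝓣 n]) x ∂Q :=
          (integral_condExp (μ := Q) (f := fun x => f n x * f m x) (hle n)).symm
      _ = ∫ x, f n x * f n x ∂Q := by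
          refine integral_congr_ae (hpull.trans ?_)
          filter_upwards [htower] with x hx
          rw [hx]
      _ = a n := rfl
  -- second moments difference
  have hdiff : ∀ m n, m ≤ n →
      ∫ x, (f m x - f n x) * (f m x - f n x) ∂Q = a m - a n := by
    intro m n hmn
    have hptw : ∀ x, (f m x - f n x) * (f m x - f n x)
        = f m x * f m x - (2:ℝ) * (f n x * f m x) + f n x * f n x := fun x => by ring
    have h1 : Integrable (fun x => f m x * f m x - (2:ℝ) * (f n x * f m x)) Q :=
      (hprod m m).sub ((hprod n m).const_mul 2)
    calc ∫ x, (f m x - f n x) * (f m x - f n x) ∂Q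
        = ∫ x, (f m x * f m x - (2:ℝ) * (f n x * f m x) + f n x * f n x) ∂Q := by
          exact integral_congr_ae (Eventually.of_forall hptw)
      _ = (∫ x, (f m x * f m x - (2:ℝ) * (f n x * f m x)) ∂Q) + ∫ x, f n x * f n x ∂Q :=
          integral_add h1 (hprod n n)
      _ = (∫ x, f m x * f m x ∂Q) - ∫ x, (2:ℝ) * (f n x * f m x) ∂Q + ∫ x, f n x * f n x ∂Q := by
          rw [integral_sub (hprod m m) ((hprod n m).const_mul 2)]
      _ = a m - 2 * (a n) + a n := by
          rw [integral_const_mul, hmul m n hmn]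
      _ = a m - a n := by ring
  -- integrability of differences and squares
  have hsubint : ∀ m n : ℕ, Integrable (fun x => f m x - f n x) Q := fun m n =>
    (hfint m).sub (hfint n)
  have hsqint : ∀ m n : ℕ, Integrable (fun x => (f m x - f n x) * (f m x - f n x)) Q := by
    intro m n
    refine (hsubint m n).bdd_mul (hsubint m n).aestronglyMeasurable (c := 2) ?_
    filter_upwards [hfb m, hfb n] with x h1 h2
    calc ‖f m x - f n x‖ ≤ ‖f m x‖ + ‖f n x‖ := norm_sub_le _ _
      _ ≤ 2 := by linarith
  -- antitone second moments
  have hA_anti : Antitone a := by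
    intro m n hmn
    have h1 := hdiff m n hmn
    have h2 : 0 ≤ ∫ x, (f m x - f n x) * (f m x - f n x) ∂Q :=
      integral_nonneg fun x => mul_self_nonneg _
    linarith
  have ha_lb : ∀ n, 0 ≤ a n := fun n => integral_nonneg fun x => mul_self_nonneg _
  have hbddb : BddBelow (Set.range a) := ⟨0, by rintro _ ⟨n, rfl⟩; exact ha_lb n⟩
  set L : ℝ := ⨅ n, a n with hL
  have hLtend : Tendsto a atTop (nhds L) := tendsto_atTop_ciInf hA_anti hbddb
  have hL_le : ∀ n, L ≤ a n := fun n => ciInf_le hbddb n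
  -- the L¹-L² bound
  have habs : ∀ m n : ℕ, m ≤ n → ∀ t : ℝ, 0 < t →
      (∫ x, |f m x - f n x| ∂Q) ≤ (t + (a m - a n)/t)/2 := by
    intro m n hmn t ht
    have hptw : ∀ x, |f m x - f n x| ≤ (t + ((f m x - f n x) * (f m x - f n x))/t)/2 := by
      intro x
      have h2 : (2*|f m x - f n x| - t) * t ≤ (f m x - f n x) * (f m x - f n x) := by
        nlinarith [mul_self_nonneg (t - |f m x - f n x|), abs_mul_abs_self (f m x - f n x)]
      have h3 : 2*|f m x - f n x| - t ≤ ((f m x - f n x) * (f m x - f n x))/t :=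
        (le_div_iff₀ ht).mpr h2
      linarith
    calc (∫ x, |f m x - f n x| ∂Q)
        ≤ ∫ x, (t + ((f m x - f n x) * (f m x - f n x))/t)/2 ∂Q :=
          integral_mono (hsubint m n).abs
            (((integrable_const t).add ((hsqint m n).div_const t)).div_const 2) hptw
      _ = (t + (a m - a n)/t)/2 := by
          rw [integral_div, integral_add (integrable_const t) ((hsqint m n).div_const t),
            integral_const, integral_div, hdiff m n hmn]
          simp [measure_univ]
  -- choice of a rapidly converging subsequence
  have hex : ∀ k : ℕ, ∃ N, ∀ n, N ≤ n → a n - L ≤ (1/4 : ℝ)^k := by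
    intro k
    obtain ⟨N, hN⟩ := Metric.tendsto_atTop.mp hLtend ((1/4 : ℝ)^k) (by positivity)
    refine ⟨N, fun n hn => ?_⟩
    have h1 := hN n hn
    rw [Real.dist_eq] at h1
    have h2 := le_abs_self (a n - L)
    linarith
  choose N hN using hex
  set φ : ℕ → ℕ := fun k => Nat.rec (N 0) (fun k ih => max (N (k+1)) (ih + 1)) k with hφdef
  have hφ_succ : ∀ k, φ (k+1) = max (N (k+1)) (φ k + 1) := fun k => rfl
  have hφmono : StrictMono φ := strictMono_nat_of_lt_succ fun k => by
    rw [hφ_succ]; exact lt_of_lt_of_le (Nat.lt_succ_self _) (le_max_right _ _)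
  have hφN : ∀ k, N k ≤ φ k := by
    intro k
    cases k with
    | zero => exact le_refl _
    | succ k => rw [hφ_succ]; exact le_max_left _ _
  have hφa : ∀ k, a (φ k) - L ≤ (1/4 : ℝ)^k := fun k => hN k (φ k) (hφN k)
  have hφk : ∀ k, k ≤ φ k := fun k => hφmono.le_apply
  -- the consecutive L¹ distances are summable
  have hΔ : ∀ k, (∫ x, |f (φ k) x - f (φ (k+1)) x| ∂Q) ≤ (1/2 : ℝ)^k := by
    intro k
    have h1 := habs (φ k) (φ (k+1)) (hφmono (Nat.lt_succ_self k)).le ((1/2 : ℝ)^k)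
      (by positivity)
    have h2 : a (φ k) - a (φ (k+1)) ≤ (1/4 : ℝ)^k := by
      have := hL_le (φ (k+1))
      linarith [hφa k]
    have h3 : (a (φ k) - a (φ (k+1))) / (1/2 : ℝ)^k ≤ (1/2 : ℝ)^k := by
      rw [div_le_iff₀ (by positivity)]
      calc a (φ k) - a (φ (k+1)) ≤ (1/4 : ℝ)^k := h2
        _ = (1/2 : ℝ)^k * (1/2 : ℝ)^k := by
            rw [← mul_pow]; norm_num
    calc (∫ x, |f (φ k) x - f (φ (k+1)) x| ∂Q)
        ≤ ((1/2 : ℝ)^k + (a (φ k) - a (φ (k+1)))/(1/2 : ℝ)^k)/2 := h1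
      _ ≤ ((1/2 : ℝ)^k + (1/2 : ℝ)^k)/2 := by linarith
      _ = (1/2 : ℝ)^k := by ring
  -- a.e. summability of the increments
  set u : ℕ → Ω → ℝ := fun k ω => |f (φ k) ω - f (φ (k+1)) ω| with hu
  have huint : ∀ k, Integrable (u k) Q := fun k => (hsubint (φ k) (φ (k+1))).abs
  have hu0 : ∀ k ω, 0 ≤ u k ω := fun k ω => abs_nonneg _
  have humeas : ∀ k, Measurable (fun ω => ENNReal.ofReal (u k ω)) := by
    intro k
    refine ENNReal.measurable_ofReal.comp ?_
    exact (((hfm (φ k)).measurable.mono (hle (φ k)) le_rfl).sub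
      ((hfm (φ (k+1))).measurable.mono (hle (φ (k+1))) le_rfl)).abs
  have hsum_ae : ∀ᵐ ω ∂Q, Summable (fun k => u k ω) := by
    have hlt : (∫⁻ ω, ∑' k, ENNReal.ofReal (u k ω) ∂Q) < ⊤ := by
      rw [lintegral_tsum fun k => (humeas k).aemeasurable]
      have hcomp : ∀ k, (∫⁻ ω, ENNReal.ofReal (u k ω) ∂Q) = ENNReal.ofReal (∫ ω, u k ω ∂Q) :=
        fun k => (ofReal_integral_eq_lintegral_ofReal (huint k)
          (Eventually.of_forall (hu0 k))).symm
      calc (∑' k, ∫⁻ ω, ENNReal.ofReal (u k ω) ∂Q)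
          ≤ ∑' k : ℕ, (ENNReal.ofReal (1/2 : ℝ))^k := by
            refine ENNReal.tsum_le_tsum fun k => ?_
            rw [hcomp k, ← ENNReal.ofReal_pow (by norm_num : (0:ℝ) ≤ 1/2)]
            exact ENNReal.ofReal_le_ofReal (hΔ k)
        _ = (1 - ENNReal.ofReal (1/2 : ℝ))⁻¹ := ENNReal.tsum_geometric _
        _ < ⊤ := by
            rw [ENNReal.inv_lt_top, tsub_pos_iff_lt]
            exact ENNReal.ofReal_lt_one.mpr (by norm_num)
    have hae := ae_lt_top (Measurable.ennreal_tsum humeas) hlt.ne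
    filter_upwards [hae] with ω hω
    have h1 : Summable (fun k => (ENNReal.ofReal (u k ω)).toReal) :=
      ENNReal.summable_toReal hω.ne
    refine h1.congr fun k => ?_
    exact ENNReal.toReal_ofReal (hu0 k ω)
  -- a.e. convergence of the subsequence
  have hcauchy : ∀ᵐ ω ∂Q, ∃ y : ℝ, Tendsto (fun k => f (φ k) ω) atTop (nhds y) := by
    filter_upwards [hsum_ae] with ω hω
    have hc : CauchySeq (fun k => f (φ k) ω) := by
      apply cauchySeq_of_summable_dist
      refine hω.congr fun k => ?_
      rw [Real.dist_eq]
    exact cauchySeq_tendsto_of_complete hc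
  -- the limit function
  set G : Ω → ℝ≥0∞ := fun ω => Filter.limsup (fun k => ENNReal.ofReal (f (φ k) ω)) atTop
    with hGdef
  set g : Ω → ℝ := fun ω => (G ω).toReal with hgdef
  have hgmeas : ∀ m : ℕ, Measurable[𝓣 m] g := by
    intro m
    have hGm : Measurable[𝓣 m] G := by
      have hGeq : G = fun ω =>
          Filter.limsup (fun k => ENNReal.ofReal (f (φ (k + m)) ω)) atTop := by
        funext ω
        exact (Filter.limsup_nat_add (fun k => ENNReal.ofReal (f (φ k) ω)) m).symm
      rw [hGeq]
      refine aux_meas_limsup (m := 𝓣 m)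
        (fun k ω => ENNReal.ofReal (f (φ (k + m)) ω)) fun k => ?_
      refine ENNReal.measurable_ofReal.comp ?_
      exact (hfm (φ (k + m))).measurable.mono
        (hanti (le_trans (Nat.le_add_left m k) (hφk (k + m)))) le_rfl
    exact ENNReal.measurable_toReal.comp hGm
  have hgA : Measurable[𝓐] g := by
    rw [h𝓐]
    intro s hs
    rw [MeasurableSpace.measurableSet_iInf]
    exact fun m => hgmeas m hs
  have hgconv : ∀ᵐ ω ∂Q, Tendsto (fun k => f (φ k) ω) atTop (nhds (g ω)) ∧ |g ω| ≤ 1 := by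
    have hball : ∀ᵐ ω ∂Q, ∀ k, 0 ≤ f (φ k) ω ∧ f (φ k) ω ≤ 1 := by
      rw [ae_all_iff]
      intro k
      filter_upwards [hf0 (φ k), hf1 (φ k)] with ω h1 h2
      exact ⟨h1, h2⟩
    filter_upwards [hcauchy, hball] with ω hω hb
    obtain ⟨y, hy⟩ := hω
    have hy0 : 0 ≤ y := le_of_tendsto_of_tendsto' tendsto_const_nhds hy fun k => (hb k).1
    have hy1 : y ≤ 1 := le_of_tendsto' hy fun k => (hb k).2
    have htends : Tendsto (fun k => ENNReal.ofReal (f (φ k) ω)) atTop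
        (nhds (ENNReal.ofReal y)) := (ENNReal.continuous_ofReal.tendsto y).comp hy
    have hGω : G ω = ENNReal.ofReal y := htends.limsup_eq
    have hgω : g ω = y := by rw [hgdef]; simp only [hGω, ENNReal.toReal_ofReal hy0]
    rw [hgω]
    exact ⟨hy, abs_le.mpr ⟨by linarith, hy1⟩⟩
  -- g is a.e. constant
  obtain ⟨c0, hc0⟩ := ae_const_of_zero_one Q 𝓐 h𝓐le h01 g hgA (hgconv.mono fun ω h => h.2)
  have hconv_c : ∀ᵐ ω ∂Q, Tendsto (fun k => f (φ k) ω) atTop (nhds c0) := by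
    filter_upwards [hgconv, hc0] with ω h h2
    rw [← h2]
    exact h.1
  -- identification of the constant
  have hck : ∀ n : ℕ, ∫ x, f n x ∂Q = (Q B).toReal := by
    intro n
    rw [hf]
    simp only
    rw [integral_condExp (hle n), hind]
    exact integral_indicator_one hB
  have hc0val : c0 = (Q B).toReal := by
    have h1 : Tendsto (fun k => ∫ x, f (φ k) x ∂Q) atTop (nhds (∫ _ : Ω, c0 ∂Q)) := by
      refine tendsto_integral_of_dominated_convergence (fun _ => (1:ℝ))
        (fun k => hfaesm (φ k)) (integrable_const 1) (fun k => hfb (φ k)) ?_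
      filter_upwards [hconv_c] with ω h
      exact h
    have h2 : (∫ _ : Ω, c0 ∂Q) = c0 := by simp [measure_univ]
    rw [h2] at h1
    have h3 : (fun k => ∫ x, f (φ k) x ∂Q) = fun _ => (Q B).toReal :=
      funext fun k => hck (φ k)
    rw [h3] at h1
    exact tendsto_nhds_unique h1 tendsto_const_nhds
  -- L¹ convergence along the subsequence
  have hI : Tendsto (fun k => ∫ x, |f (φ k) x - c0| ∂Q) atTop (nhds 0) := by
    have h1 : Tendsto (fun k => ∫ x, |f (φ k) x - c0| ∂Q) atTop
        (nhds (∫ _ : Ω, (0:ℝ) ∂Q)) := by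
      refine tendsto_integral_of_dominated_convergence (fun _ => (2:ℝ))
        (fun k => ((hfaesm (φ k)).sub aestronglyMeasurable_const).norm)
        (integrable_const 2) ?_ ?_
      · intro k
        filter_upwards [hfb (φ k)] with x hx
        have hc1 : |c0| ≤ 1 := by
          rw [hc0val, abs_of_nonneg ENNReal.toReal_nonneg]
          calc (Q B).toReal ≤ (Q Set.univ).toReal :=
              ENNReal.toReal_mono (measure_ne_top Q _) (measure_mono (Set.subset_univ B))
            _ = 1 := by simp [measure_univ]
        rw [Real.norm_eq_abs, abs_abs]
        calc |f (φ k) x - c0| ≤ |f (φ k) x| + |c0| := abs_sub _ _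
          _ ≤ 2 := by rw [← Real.norm_eq_abs]; linarith
      · filter_upwards [hconv_c] with ω h
        have := (h.sub_const c0).abs
        rwa [sub_self, abs_zero] at this
    rwa [integral_zero] at h1
  -- full L¹ convergence
  have hmain : Tendsto (fun n => ∫ x, |f n x - c0| ∂Q) atTop (nhds 0) := by
    rw [Metric.tendsto_atTop]
    intro ε hε
    obtain ⟨N1, hN1⟩ := Metric.tendsto_atTop.mp hLtend ((ε/4)^2) (by positivity)
    obtain ⟨K, hK⟩ := Metric.tendsto_atTop.mp hI (ε/2) (by positivity)
    refine ⟨N1, fun n hn => ?_⟩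
    set k := max n K with hk
    have hkK : K ≤ k := le_max_right _ _
    have hφkn : n ≤ φ k := le_trans (le_max_left n K) (hφk k)
    have h1 : (∫ x, |f n x - f (φ k) x| ∂Q) ≤ (ε/4 + (a n - a (φ k))/(ε/4))/2 :=
      habs n (φ k) hφkn (ε/4) (by positivity)
    have h2 : a n - a (φ k) ≤ (ε/4)^2 := by
      have h3 := hN1 n hn
      rw [Real.dist_eq] at h3
      have h4 := hL_le (φ k)
      have h5 := le_abs_self (a n - L)
      linarith
    have h5 : (∫ x, |f n x - f (φ k) x| ∂Q) ≤ ε/4 := by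
      have h6 : (a n - a (φ k))/(ε/4) ≤ ε/4 := by
        rw [div_le_iff₀ (by positivity)]
        calc a n - a (φ k) ≤ (ε/4)^2 := h2
          _ = ε/4 * (ε/4) := by ring
      linarith
    have h6 := hK k hkK
    rw [Real.dist_eq, sub_zero] at h6
    have h7 : (∫ x, |f (φ k) x - c0| ∂Q) < ε/2 :=
      lt_of_le_of_lt (le_abs_self _) h6
    have hic : Integrable (fun x => f (φ k) x - c0) Q := (hfint (φ k)).sub (integrable_const c0)
    have htri : (∫ x, |f n x - c0| ∂Q)
        ≤ (∫ x, |f n x - f (φ k) x| ∂Q) + ∫ x, |f (φ k) x - c0| ∂Q := by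
      have hadd : (∫ x, (|f n x - f (φ k) x| + |f (φ k) x - c0|) ∂Q)
          = (∫ x, |f n x - f (φ k) x| ∂Q) + ∫ x, |f (φ k) x - c0| ∂Q :=
        integral_add (hsubint n (φ k)).abs hic.abs
      rw [← hadd]
      refine integral_mono ((hfint n).sub (integrable_const c0)).abs
        ((hsubint n (φ k)).abs.add hic.abs) fun x => abs_sub_le _ _ _
    rw [Real.dist_eq, sub_zero,
      abs_of_nonneg (integral_nonneg fun x => abs_nonneg _)]
    linarith
  -- bound the supremum by the L¹ distance
  have hsup_le : ∀ n, (⨆ H : {H : Set Ω // MeasurableSet[𝓣 n] H},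
      |(Q (B ∩ H.1)).toReal - (Q B).toReal * (Q H.1).toReal|) ≤ ∫ x, |f n x - c0| ∂Q := by
    intro n
    refine Real.iSup_le (fun H => ?_) (integral_nonneg fun x => abs_nonneg _)
    obtain ⟨H, hH⟩ := H
    have e1 : (Q (B ∩ H)).toReal = ∫ x in H, f n x ∂Q := by
      rw [setIntegral_condExp (hle n) hind_int hH, hind, setIntegral_indicator hB,
        setIntegral_const, Set.inter_comm H B]
      simp
      rfl
    have e2 : (Q B).toReal * (Q H).toReal = ∫ x in H, c0 ∂Q := by
      rw [setIntegral_const, hc0val, smul_eq_mul, mul_comm]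
      rfl
    have e3 : (Q (B ∩ H)).toReal - (Q B).toReal * (Q H).toReal
        = ∫ x in H, (f n x - c0) ∂Q := by
      rw [e1, e2, integral_sub ((hfint n).integrableOn) ((integrableOn_const_iff (by finiteness)).mpr (Or.inr (measure_lt_top _ _)))]
    rw [e3]
    calc |∫ x in H, (f n x - c0) ∂Q| ≤ ∫ x in H, |f n x - c0| ∂Q := by
          rw [← Real.norm_eq_abs]
          refine (norm_integral_le_integral_norm _).trans (le_of_eq ?_)
          simp [Real.norm_eq_abs]
      _ ≤ ∫ x, |f n x - c0| ∂Q :=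
          setIntegral_le_integral ((hfint n).sub (integrable_const c0)).abs
            (Eventually.of_forall fun x => abs_nonneg _)
  -- conclude
  exact squeeze_zero (fun n => Real.iSup_nonneg fun H => abs_nonneg _) hsup_le hmain
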